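/- Let K be a field of characteristic not 2 and a ∈ K a nonzero sum of squares. If the (n+1)-fold Pfister form 2^n × ⟨1, −a⟩ is hyperbolic over K, then a is a sum of 2^n squares in K. -/

import Mathlib

/-- `a` is a sum of `n` squares in `R`. -/
def IsSumSqN {R : Type*} [CommRing R] (n : ℕ) (a : R) : Prop :=
  ∃ x : Fin n → R, a = ∑ i, x i ^ 2

/-- `a` is a sum of squares in `R`. -/
def IsSOS {R : Type*} [CommRing R] (a : R) : Prop := ∃ n, IsSumSqN n a

/-- The level `s(R)`. -/
noncomputable def levelN (R : Type*) [CommRing R] : ℕ∞ :=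
  sInf {n : ℕ∞ | ∃ m : ℕ, (m : ℕ∞) = n ∧ IsSumSqN m (-1 : R)}

/-- The Pythagoras number `p(R)`. -/
noncomputable def pythNum (R : Type*) [CommRing R] : ℕ∞ :=
  sInf {n : ℕ∞ | ∃ m : ℕ, (m : ℕ∞) = n ∧ ∀ a : R, IsSOS a → IsSumSqN m a}

open Classical in
/-- The modified Pythagoras number `p'(R)`. -/
noncomputable def pythNum' (R : Type*) [CommRing R] : ℕ∞ :=
  if ¬ IsSOS (-1 : R) ∨ ringChar R = 2 then pythNum R else levelN R + 1

/-- The hyperbolic diagonal form `m × ⟨1,-1⟩` over `K`. -/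
noncomputable def hypForm (K : Type*) [Field K] (m : ℕ) :
    QuadraticForm K (Fin m ⊕ Fin m → K) :=
  QuadraticMap.weightedSumSquares K (Sum.elim (fun _ => (1 : K)) (fun _ => (-1 : K)))

/-- A quadratic form is hyperbolic if it is isometric to some `m × ⟨1,-1⟩`. -/
def IsHypForm {K : Type*} [Field K] {ι : Type*} [Fintype ι]
    (q : QuadraticForm K (ι → K)) : Prop :=
  ∃ m, QuadraticMap.Equivalent q (hypForm K m)

lemma isSumSqN_zero {R : Type*} [CommRing R] (n : ℕ) : IsSumSqN n (0 : R) :=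
  ⟨0, by simp⟩

lemma isSumSqN_cast {R : Type*} [CommRing R] {m k : ℕ} (h : m = k) {a : R} :
    IsSumSqN m a → IsSumSqN k a := by subst h; exact id

lemma isSumSqN_add {R : Type*} [CommRing R] {m k : ℕ} {a b : R}
    (hb : IsSumSqN m a) (hk : IsSumSqN k b) : IsSumSqN (m + k) (a + b) := by
  obtain ⟨x, rfl⟩ := hb; obtain ⟨y, rfl⟩ := hk
  refine ⟨Fin.append x y, ?_⟩
  rw [Fin.sum_univ_add]
  simp [Fin.append_left, Fin.append_right]

lemma isSumSqN_split {R : Type*} [CommRing R] {m k : ℕ} {a : R} (h : IsSumSqN (m + k) a) :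
    ∃ p q : R, IsSumSqN m p ∧ IsSumSqN k q ∧ a = p + q := by
  obtain ⟨x, rfl⟩ := h
  exact ⟨_, _, ⟨fun i => x (Fin.castAdd k i), rfl⟩, ⟨fun i => x (Fin.natAdd m i), rfl⟩,
    Fin.sum_univ_add _⟩

lemma isSumSqN_mul_sq {R : Type*} [CommRing R] {m : ℕ} {a : R} (c : R)
    (h : IsSumSqN m a) : IsSumSqN m (c ^ 2 * a) := by
  obtain ⟨x, rfl⟩ := h
  exact ⟨fun i => c * x i, by simp [mul_pow, Finset.mul_sum]⟩

lemma pfister_mul {K : Type*} [Field K] :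
    ∀ n : ℕ, ∀ s t : K, IsSumSqN (2 ^ n) s → IsSumSqN (2 ^ n) t → IsSumSqN (2 ^ n) (s * t) := by
  intro n
  induction n with
  | zero =>
    rintro s t ⟨x, rfl⟩ ⟨y, rfl⟩
    exact ⟨fun i => x 0 * y 0, by simp [Fin.sum_univ_one]; ring⟩
  | succ n ih =>
    intro s t hs ht
    have hsplit : (2 : ℕ) ^ (n + 1) = 2 ^ n + 2 ^ n := by ring
    obtain ⟨p, q, hp, hq, rfl⟩ := isSumSqN_split (isSumSqN_cast hsplit hs)
    obtain ⟨α, β, hα, hβ, rfl⟩ := isSumSqN_split (isSumSqN_cast hsplit ht)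
    by_cases hp0 : p = 0
    · subst hp0
      have h1 := ih q α hq hα
      have h2 := ih q β hq hβ
      refine isSumSqN_cast hsplit.symm ?_
      have := isSumSqN_add h1 h2
      rw [show (0 + q) * (α + β) = q * α + q * β by ring]
      exact this
    by_cases hq0 : q = 0
    · subst hq0
      have h1 := ih p α hp hα
      have h2 := ih p β hp hβ
      refine isSumSqN_cast hsplit.symm ?_
      rw [show (p + 0) * (α + β) = p * α + p * β by ring]
      exact isSumSqN_add h1 h2
    · -- both nonzero
      have hpq : p * q ≠ 0 := mul_ne_zero hp0 hq0
      set β' : K := ((p * q)⁻¹) ^ 2 * (β * p * q) with hβ'def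
      have hβ' : IsSumSqN (2 ^ n) β' :=
        isSumSqN_mul_sq _ (ih _ q (ih _ p hβ hp) hq)
      have hβeq : β = p * q * β' := by
        rw [hβ'def, show p * q * ((p * q)⁻¹ ^ 2 * (β * p * q)) = β * ((p * q) * (p * q)⁻¹) ^ 2 by ring, mul_inv_cancel₀ hpq]
        ring
      obtain ⟨u, hu⟩ := hα
      obtain ⟨v, hv⟩ := hβ'
      have key : (p + q) * (α + β) =
          p * (∑ i, (u i + q * v i) ^ 2) + q * (∑ i, (u i - p * v i) ^ 2) := by
        calc (p + q) * (α + β)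
            = (p + q) * α + ((p + q) * (p * q)) * β' := by rw [hβeq]; ring
          _ = (∑ i, (p + q) * u i ^ 2) + ∑ i, ((p + q) * (p * q)) * v i ^ 2 := by
              rw [hu, hv, Finset.mul_sum, Finset.mul_sum]
          _ = ∑ i, ((p + q) * u i ^ 2 + ((p + q) * (p * q)) * v i ^ 2) := by
              rw [← Finset.sum_add_distrib]
          _ = ∑ i, (p * (u i + q * v i) ^ 2 + q * (u i - p * v i) ^ 2) :=
              Finset.sum_congr rfl fun i _ => by ring
          _ = p * (∑ i, (u i + q * v i) ^ 2) + q * (∑ i, (u i - p * v i) ^ 2) := by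
              rw [Finset.sum_add_distrib, ← Finset.mul_sum, ← Finset.mul_sum]
      rw [key]
      refine isSumSqN_cast hsplit.symm
        (isSumSqN_add (ih p _ hp ⟨_, rfl⟩) (ih q _ hq ⟨_, rfl⟩))

lemma isSumSqN_of_isotropic {K : Type*} [Field K] (h2 : (2 : K) ≠ 0) {m : ℕ}
    (z : Fin m → K) (hz : z ≠ 0) (h0 : ∑ i, z i ^ 2 = 0) (b : K) : IsSumSqN m b := by
  obtain ⟨j, hj⟩ := Function.ne_iff.mp hz
  simp only [Pi.zero_apply] at hj
  refine ⟨fun i => if i = j then (b + 1) / 2 else z i / z j * ((b - 1) / 2), ?_⟩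
  rw [← Finset.sum_erase_add _ _ (Finset.mem_univ j)]
  have herase : ∑ i ∈ Finset.univ.erase j,
      (if i = j then (b + 1) / 2 else z i / z j * ((b - 1) / 2)) ^ 2
      = ((b - 1) / 2) ^ 2 * ∑ i ∈ Finset.univ.erase j, (z i / z j) ^ 2 := by
    rw [Finset.mul_sum]
    refine Finset.sum_congr rfl fun i hi => ?_
    rw [if_neg (Finset.mem_erase.mp hi).1]
    ring
  have hzj : ∑ i ∈ Finset.univ.erase j, (z i / z j) ^ 2 = -1 := by
    have : ∑ i ∈ Finset.univ.erase j, (z i) ^ 2 = - (z j ^ 2) := by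
      have h := Finset.sum_erase_add Finset.univ (fun i => z i ^ 2) (Finset.mem_univ j)
      beta_reduce at h
      rw [h0] at h
      linear_combination h
    have hsum : ∑ i ∈ Finset.univ.erase j, (z i / z j) ^ 2
        = (∑ i ∈ Finset.univ.erase j, (z i) ^ 2) / z j ^ 2 := by
      rw [Finset.sum_div]
      exact Finset.sum_congr rfl fun i _ => by rw [div_pow]
    rw [hsum, this, neg_div, div_self (pow_ne_zero _ hj)]
  rw [herase, hzj]
  beta_reduce
  rw [if_pos rfl]
  field_simp
  ring


/-- If `2^n × ⟨1,-a⟩` is hyperbolic over a field of characteristic not 2, then the nonzero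
sum of squares `a` is a sum of `2^n` squares. -/
theorem sumSq_two_pow_of_pfister_hyperbolic (K : Type*) [Field K] (h2 : ringChar K ≠ 2)
    (n : ℕ) (a : K) (ha : a ≠ 0) (hsos : IsSOS a)
    (hhyp : IsHypForm (QuadraticMap.weightedSumSquares K
      (fun p : Fin (2 ^ n) × Fin 2 => if p.2 = 0 then (1 : K) else -a))) :
    IsSumSqN (2 ^ n) a := by
  have h2' : (2 : K) ≠ 0 := Ring.two_ne_zero h2
  obtain ⟨m, ⟨e⟩⟩ := hhyp
  -- `m ≠ 0`
  rcases Nat.eq_zero_or_pos m with rfl | hm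
  · exfalso
    have hsub : Subsingleton (Fin 0 ⊕ Fin 0 → K) := inferInstance
    have eq : (Fin (2 ^ n) × Fin 2 → K) ≃ (Fin 0 ⊕ Fin 0 → K) := e.toLinearEquiv.toEquiv
    have h01 : (fun _ : Fin (2 ^ n) × Fin 2 => (1 : K)) = (fun _ => (0 : K)) := by
      apply eq.injective
      funext i
      exact i.elim Fin.elim0 Fin.elim0
    have := congrFun h01 (⟨0, by positivity⟩, 0)
    exact one_ne_zero this
  -- isotropic vector
  set w : Fin m ⊕ Fin m → K := fun _ => 1 with hw
  have hwval : hypForm K m w = 0 := by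
    rw [hypForm, QuadraticMap.weightedSumSquares_apply, Fintype.sum_sum_type]
    simp [hw]
  set v : Fin (2 ^ n) × Fin 2 → K := e.symm w with hvdef
  have hvval : QuadraticMap.weightedSumSquares K
      (fun p : Fin (2 ^ n) × Fin 2 => if p.2 = 0 then (1 : K) else -a) v = 0 := by
    rw [hvdef]
    rw [e.symm.map_app w]
    exact hwval
  have hvne : v ≠ 0 := by
    intro hv0
    have : w = 0 := by
      have h := e.toLinearEquiv.apply_symm_apply w
      rw [show e.toLinearEquiv.symm w = v from rfl, hv0, map_zero] at h
      exact h.symm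
    have := congrFun this (Sum.inl ⟨0, hm⟩)
    exact one_ne_zero this
  set x : Fin (2 ^ n) → K := fun i => v (i, 0) with hx
  set y : Fin (2 ^ n) → K := fun i => v (i, 1) with hy
  have hst : (∑ i, x i ^ 2) = a * ∑ i, y i ^ 2 := by
    rw [QuadraticMap.weightedSumSquares_apply, Fintype.sum_prod_type] at hvval
    have : ∀ i : Fin (2 ^ n),
        (∑ j : Fin 2, (if j = 0 then (1 : K) else -a) • (v (i, j) * v (i, j)))
        = x i ^ 2 - a * y i ^ 2 := by
      intro i
      rw [Fin.sum_univ_two]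
      simp [hx, hy]
      ring
    rw [Finset.sum_congr rfl fun i _ => this i, Finset.sum_sub_distrib,
      ← Finset.mul_sum] at hvval
    linear_combination hvval
  by_cases ht : (∑ i, y i ^ 2) = 0
  · -- isotropic diagonal form, so universal
    rw [ht, mul_zero] at hst
    obtain ⟨⟨i, j⟩, hp⟩ := Function.ne_iff.mp hvne
    simp only [Pi.zero_apply] at hp
    fin_cases j
    · exact isSumSqN_of_isotropic h2' x (fun h => hp (congrFun h i)) hst a
    · exact isSumSqN_of_isotropic h2' y (fun h => hp (congrFun h i)) ht a
  · have hprod : IsSumSqN (2 ^ n) ((∑ i, x i ^ 2) * (∑ i, y i ^ 2)) :=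
      pfister_mul n _ _ ⟨x, rfl⟩ ⟨y, rfl⟩
    have : a = ((∑ i, y i ^ 2)⁻¹) ^ 2 * ((∑ i, x i ^ 2) * (∑ i, y i ^ 2)) := by
      rw [hst]
      field_simp
    rw [this]
    exact isSumSqN_mul_sq _ hprod
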